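/- The rate function boundary limit: for i.i.d. variables X_l taking value log C_i with probability p_i > 0 (C_i positive integers, not all equal), the Cramér rate function I(λ') = sup_θ [θλ' − log ∑_i p_i C_i^θ] satisfies I(λ') → −log(∑_{i : C_i = C_max} p_i) as λ' ↗ log C_max. -/

import Mathlib

open Filter Finset Set

/-- Right boundary limit of the rate function: `I(λ') → -log(∑_{i : C_i = C_max} p_i)`
as `λ' ↗ log C_max`. -/
theorem stmt14 {ι : Type*} [Fintype ι] [Nonempty ι]
    (C : ι → ℕ) (hC : ∀ i, 0 < C i) (hne : ∃ i j, C i ≠ C j)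
    (p : ι → ℝ) (hp : ∀ i, 0 < p i) (hsum : ∑ i, p i = 1) :
    let Cmax : ℕ := Finset.univ.sup' Finset.univ_nonempty C
    Filter.Tendsto
      (fun lam : ℝ => ⨆ θ : ℝ, (θ * lam - Real.log (∑ i, p i * (C i : ℝ) ^ θ)))
      (nhdsWithin (Real.log (Cmax : ℝ)) (Set.Iio (Real.log (Cmax : ℝ))))
      (nhds (-Real.log (∑ i ∈ Finset.univ.filter (fun i => C i = Cmax), p i))) := by
  intro Cmax
  obtain ⟨i0, -, hi0⟩ := Finset.exists_mem_eq_sup' (Finset.univ_nonempty (α := ι)) C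
  have hCmax_pos : 0 < Cmax := lt_of_lt_of_le (hC i0) (Finset.le_sup' C (Finset.mem_univ i0))
  have hCmaxR : (0:ℝ) < (Cmax:ℝ) := by exact_mod_cast hCmax_pos
  set L : ℝ := Real.log (Cmax : ℝ) with hL
  set q : ℝ := ∑ i ∈ Finset.univ.filter (fun i => C i = Cmax), p i with hq
  have hq_pos : 0 < q :=
    Finset.sum_pos (fun i _ => hp i) ⟨i0, by simp [hi0.symm]; rfl⟩
  have hq_le : q ≤ 1 := by
    rw [← hsum]
    exact Finset.sum_le_sum_of_subset_of_nonneg (Finset.filter_subset _ _)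
      (fun i _ _ => (hp i).le)
  set S : ℝ := -Real.log q with hS
  have hS_nonneg : 0 ≤ S := by
    have := Real.log_nonpos hq_pos.le hq_le
    rw [hS]; linarith
  have hCiR : ∀ i, (0:ℝ) < (C i : ℝ) := fun i => by exact_mod_cast hC i
  have hCle : ∀ i, (C i : ℝ) ≤ (Cmax : ℝ) := fun i => by
    exact_mod_cast Finset.le_sup' C (Finset.mem_univ i)
  set μ : ℝ := ∑ i, p i * Real.log (C i) with hμ
  obtain ⟨a, b, hab⟩ := hne
  have hexlt : ∃ j, C j < Cmax := by
    by_contra h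
    push_neg at h
    have ha : C a = Cmax := le_antisymm (Finset.le_sup' C (Finset.mem_univ a)) (h a)
    have hb : C b = Cmax := le_antisymm (Finset.le_sup' C (Finset.mem_univ b)) (h b)
    exact hab (ha.trans hb.symm)
  obtain ⟨j, hj⟩ := hexlt
  have hμ_lt : μ < L := by
    have h1 : μ < ∑ i, p i * L := by
      refine Finset.sum_lt_sum (fun i _ => ?_) ⟨j, Finset.mem_univ j, ?_⟩
      · exact mul_le_mul_of_nonneg_left (Real.log_le_log (hCiR i) (hCle i)) (hp i).le
      · exact mul_lt_mul_of_pos_left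
          (Real.log_lt_log (hCiR j) (by exact_mod_cast hj)) (hp j)
    calc μ < ∑ i, p i * L := h1
      _ = L := by rw [← Finset.sum_mul, hsum, one_mul]
  set g : ℝ → ℝ := fun θ => ∑ i, p i * (C i : ℝ) ^ θ with hg
  have hg_pos : ∀ θ, 0 < g θ := fun θ =>
    Finset.sum_pos (fun i _ => mul_pos (hp i) (Real.rpow_pos_of_pos (hCiR i) θ))
      Finset.univ_nonempty
  have hA : ∀ θ, q * (Cmax:ℝ) ^ θ ≤ g θ := by
    intro θ
    rw [hq, Finset.sum_mul]
    calc ∑ i ∈ Finset.univ.filter (fun i => C i = Cmax), p i * (Cmax:ℝ)^θ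
        = ∑ i ∈ Finset.univ.filter (fun i => C i = Cmax), p i * (C i:ℝ)^θ := by
          refine Finset.sum_congr rfl fun i hi => ?_
          rw [Finset.mem_filter] at hi
          rw [hi.2]
      _ ≤ g θ := Finset.sum_le_sum_of_subset_of_nonneg (Finset.filter_subset _ _)
          (fun i _ _ => (mul_pos (hp i) (Real.rpow_pos_of_pos (hCiR i) θ)).le)
  have hJ : ∀ θ, θ * μ ≤ Real.log (g θ) := by
    intro θ
    have hj2 := (strictConcaveOn_log_Ioi.concaveOn).le_map_sum
      (t := Finset.univ) (w := p) (p := fun i => (C i:ℝ)^θ)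
      (fun i _ => (hp i).le) hsum
      (fun i _ => Real.rpow_pos_of_pos (hCiR i) θ)
    simp only [smul_eq_mul] at hj2
    have e1 : ∑ i, p i * Real.log ((C i:ℝ)^θ) = θ * μ := by
      rw [hμ, Finset.mul_sum]
      refine Finset.sum_congr rfl fun i _ => ?_
      rw [Real.log_rpow (hCiR i)]
      ring
    rw [e1] at hj2
    exact hj2
  -- upper bound
  have hub : ∀ lam : ℝ, μ ≤ lam → lam ≤ L → ∀ θ : ℝ, θ * lam - Real.log (g θ) ≤ S := by
    intro lam h1 h2 θ
    rcases le_or_gt 0 θ with hθ | hθ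
    · have hlog : Real.log q + θ * L ≤ Real.log (g θ) := by
        have e : Real.log q + θ * L = Real.log (q * (Cmax:ℝ)^θ) := by
          rw [Real.log_mul hq_pos.ne' (Real.rpow_pos_of_pos hCmaxR θ).ne',
            Real.log_rpow hCmaxR]
        rw [e]
        exact Real.log_le_log (mul_pos hq_pos (Real.rpow_pos_of_pos hCmaxR θ)) (hA θ)
      have h3 : θ * lam ≤ θ * L := mul_le_mul_of_nonneg_left h2 hθ
      rw [hS]; linarith
    · have h3 : θ * lam ≤ θ * μ := mul_le_mul_of_nonpos_left h1 hθ.le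
      have h4 := hJ θ
      linarith
  -- limit of θ*L - log g θ
  have hratio : Tendsto (fun θ : ℝ => ∑ i, p i * ((C i : ℝ)/(Cmax:ℝ)) ^ θ)
      atTop (nhds q) := by
    have hqe : q = ∑ i, (if C i = Cmax then p i else 0) := by
      rw [hq, Finset.sum_filter]
    rw [hqe]
    refine tendsto_finset_sum _ fun i _ => ?_
    by_cases hi : C i = Cmax
    · simp only [if_pos hi, hi, div_self hCmaxR.ne', Real.one_rpow, mul_one]
      exact tendsto_const_nhds
    · simp only [hi, if_false]
      have hlt : (C i : ℝ)/(Cmax:ℝ) < 1 := (div_lt_one hCmaxR).2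
        (lt_of_le_of_ne (hCle i) (by exact_mod_cast hi))
      have hge : (0:ℝ) < (C i : ℝ)/(Cmax:ℝ) := div_pos (hCiR i) hCmaxR
      have := (tendsto_rpow_atTop_of_base_lt_one _ (by linarith) hlt).const_mul (p i)
      simpa using this
  have hid : ∀ θ : ℝ, Real.log (∑ i, p i * ((C i:ℝ)/(Cmax:ℝ))^θ)
      = Real.log (g θ) - θ * L := by
    intro θ
    have h1 : ∑ i, p i * ((C i:ℝ)/(Cmax:ℝ))^θ = g θ / (Cmax:ℝ)^θ := by
      rw [hg, Finset.sum_div]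
      refine Finset.sum_congr rfl fun i _ => ?_
      rw [Real.div_rpow (Nat.cast_nonneg _) (Nat.cast_nonneg _), mul_div_assoc]
    rw [h1, Real.log_div (hg_pos θ).ne' (Real.rpow_pos_of_pos hCmaxR θ).ne',
      Real.log_rpow hCmaxR]
  have hlog : Tendsto (fun θ : ℝ => Real.log (∑ i, p i * ((C i:ℝ)/(Cmax:ℝ))^θ))
      atTop (nhds (Real.log q)) :=
    ((Real.continuousAt_log hq_pos.ne').tendsto).comp hratio
  have hlim : Tendsto (fun θ : ℝ => θ * L - Real.log (g θ)) atTop (nhds S) := by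
    have h2 := hlog.neg
    have he : (fun θ : ℝ => -Real.log (∑ i, p i * ((C i:ℝ)/(Cmax:ℝ))^θ))
        = fun θ : ℝ => θ * L - Real.log (g θ) := by
      funext θ; rw [hid θ]; ring
    rw [he] at h2
    exact h2
  -- assemble
  rw [Metric.tendsto_nhds]
  intro ε hε
  have hev : ∀ᶠ θ : ℝ in atTop, S - ε/2 < θ * L - Real.log (g θ) :=
    hlim.eventually (eventually_gt_nhds (by linarith))
  obtain ⟨θ0, hθ0pos, hθ0⟩ := ((eventually_gt_atTop (0:ℝ)).and hev).exists
  set δ : ℝ := ε/(2*θ0) with hδ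
  have hδpos : 0 < δ := div_pos hε (by linarith)
  have hLδ : L - δ < L := by linarith
  filter_upwards [eventually_mem_nhdsWithin,
    ((eventually_gt_nhds hμ_lt).filter_mono nhdsWithin_le_nhds),
    ((eventually_gt_nhds hLδ).filter_mono nhdsWithin_le_nhds)] with lam hlam hμlam hδlam
  have hlamL : lam < L := hlam
  have hbdd : BddAbove (Set.range fun θ : ℝ => θ * lam - Real.log (g θ)) := by
    refine ⟨S, ?_⟩
    rintro x ⟨θ, rfl⟩
    exact hub lam hμlam.le hlamL.le θ
  have hIle : (⨆ θ : ℝ, θ * lam - Real.log (g θ)) ≤ S :=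
    ciSup_le (hub lam hμlam.le hlamL.le)
  have hf0 : S - ε < θ0 * lam - Real.log (g θ0) := by
    have h5 : θ0 * (L - lam) < θ0 * δ :=
      mul_lt_mul_of_pos_left (by linarith) hθ0pos
    have h6 : θ0 * δ = ε/2 := by
      rw [hδ]; field_simp
    nlinarith [hθ0]
  have hIge : S - ε < ⨆ θ : ℝ, θ * lam - Real.log (g θ) :=
    lt_of_lt_of_le hf0 (le_ciSup hbdd θ0)
  rw [Real.dist_eq, abs_lt]
  constructor <;> [linarith; linarith]
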